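/- For every leaf i ∈ X, the heightened evolutionary distinctiveness satisfies ψ_i = Σ_{e ∈ E} l(e) · (∏_{j ∈ C_i(e) ∖ {i}} ε_j) · (1 − ∏_{j ∈ X ∖ C_i(e)} ε_j) (where an empty product equals 1). (Theorem 2: formula for the unrooted HED index.) -/

import Mathlib

open Finset

/-- Unrooted phylogenetic diversity: the sum of the lengths of edges `e` whose
induced split `{σ e, X \ σ e}` has both sides meeting `S`. -/
noncomputable def PDu {X E : Type*} [Fintype X] [Fintype E] [DecidableEq X]
    (l : E → ℝ) (σ : E → Finset X) (S : Finset X) : ℝ :=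
  ∑ e ∈ univ.filter
      (fun e => (σ e ∩ S).Nonempty ∧ (((univ : Finset X) \ σ e) ∩ S).Nonempty), l e

/-- The side of the split of edge `e` containing leaf `i`. -/
def sideOf {X E : Type*} [Fintype X] [DecidableEq X]
    (σ : E → Finset X) (i : X) (e : E) : Finset X :=
  if i ∈ σ e then σ e else (univ : Finset X) \ σ e

/-- Heightened evolutionary distinctiveness (HED) of species `i` on an unrooted
tree: the expected marginal contribution of `i` to phylogenetic diversity under
independent extinctions with extinction probabilities `ε`. -/
noncomputable def psiU {X E : Type*} [Fintype X] [Fintype E] [DecidableEq X]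
    (l : E → ℝ) (σ : E → Finset X) (ε : X → ℝ) (i : X) : ℝ :=
  ∑ S ∈ ((univ : Finset X) \ {i}).powerset,
    ((∏ j ∈ S, (1 - ε j)) * ∏ j ∈ ((univ : Finset X) \ {i}) \ S, ε j) *
      (PDu l σ (S ∪ {i}) - PDu l σ S)

/-- Theorem 2: the unrooted HED index formula
`ψ_i = Σ_e l(e) · (Π_{j ∈ C_i(e) \ {i}} ε_j) · (1 − Π_{j ∈ X \ C_i(e)} ε_j)`. -/
lemma bernoulli_sum {X : Type*} [DecidableEq X] (ε : X → ℝ) (B : Finset X) :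
    ∑ S ∈ B.powerset, (∏ j ∈ S, (1 - ε j)) * ∏ j ∈ B \ S, ε j = 1 := by
  simpa using (Finset.prod_add (fun j => (1 - ε j)) ε B).symm

lemma edge_sum {X : Type*} [Fintype X] [DecidableEq X] (ε : X → ℝ) (i : X)
    (A : Finset X) (hiA : i ∈ A) (c : ℝ) :
    ∑ S ∈ ((univ : Finset X) \ {i}).powerset,
      ((∏ j ∈ S, (1 - ε j)) * ∏ j ∈ ((univ : Finset X) \ {i}) \ S, ε j) *
        ((if ((A ∩ (S ∪ {i})).Nonempty ∧ (((univ : Finset X) \ A) ∩ (S ∪ {i})).Nonempty) then c else 0)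
         - (if ((A ∩ S).Nonempty ∧ (((univ : Finset X) \ A) ∩ S).Nonempty) then c else 0)) =
    c * (∏ j ∈ A \ {i}, ε j) * (1 - ∏ j ∈ (univ : Finset X) \ A, ε j) := by
  classical
  have hiB : i ∉ (univ : Finset X) \ A := by simp [hiA]
  -- step 1: simplify the bracket
  have hstep : ∀ S ∈ ((univ : Finset X) \ {i}).powerset,
      ((∏ j ∈ S, (1 - ε j)) * ∏ j ∈ ((univ : Finset X) \ {i}) \ S, ε j) *
        ((if ((A ∩ (S ∪ {i})).Nonempty ∧ (((univ : Finset X) \ A) ∩ (S ∪ {i})).Nonempty) then c else 0)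
         - (if ((A ∩ S).Nonempty ∧ (((univ : Finset X) \ A) ∩ S).Nonempty) then c else 0)) =
      (if ((((univ : Finset X) \ A) ∩ S).Nonempty ∧ ¬ ((A ∩ S).Nonempty)) then
        ((∏ j ∈ S, (1 - ε j)) * ∏ j ∈ ((univ : Finset X) \ {i}) \ S, ε j) * c else 0) := by
    intro S hS
    have h1 : (A ∩ (S ∪ {i})).Nonempty :=
      ⟨i, mem_inter.2 ⟨hiA, mem_union_right _ (mem_singleton_self i)⟩⟩
    have h2 : ((univ : Finset X) \ A) ∩ (S ∪ {i}) = ((univ : Finset X) \ A) ∩ S := by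
      ext x
      simp only [mem_inter, mem_union, mem_singleton]
      constructor
      · rintro ⟨hxB, hx | rfl⟩
        · exact ⟨hxB, hx⟩
        · exact absurd hxB hiB
      · rintro ⟨hxB, hx⟩; exact ⟨hxB, Or.inl hx⟩
    rw [h2]
    by_cases hb : (((univ : Finset X) \ A) ∩ S).Nonempty <;>
      by_cases ha : (A ∩ S).Nonempty <;>
      simp only [h1, true_and] <;> simp [hb, ha, sub_self]
  rw [Finset.sum_congr rfl hstep, Finset.sum_ite, Finset.sum_const_zero, add_zero]
  -- step 2: the filtered set is the set of nonempty subsets of univ \ A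
  have hset : ((univ : Finset X) \ {i}).powerset.filter
      (fun S => (((univ : Finset X) \ A) ∩ S).Nonempty ∧ ¬ ((A ∩ S).Nonempty)) =
      ((univ : Finset X) \ A).powerset.filter (fun S => S.Nonempty) := by
    ext S
    simp only [mem_filter, mem_powerset]
    constructor
    · rintro ⟨hSsub, hb, ha⟩
      have hSB : S ⊆ (univ : Finset X) \ A := by
        intro x hx
        rw [mem_sdiff]
        refine ⟨mem_univ x, fun hxA => ?_⟩
        exact ha ⟨x, mem_inter.2 ⟨hxA, hx⟩⟩
      exact ⟨hSB, hb.mono inter_subset_right⟩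
    · rintro ⟨hSB, hne⟩
      refine ⟨?_, ?_, ?_⟩
      · intro x hx
        rw [mem_sdiff, mem_singleton]
        refine ⟨mem_univ x, fun h => ?_⟩
        subst h
        exact (mem_sdiff.1 (hSB hx)).2 hiA
      · rwa [inter_eq_right.2 hSB]
      · rintro ⟨x, hx⟩
        rw [mem_inter] at hx
        exact (mem_sdiff.1 (hSB hx.2)).2 hx.1
  rw [hset]
  -- step 3: for S ⊆ univ \ A, factor the probability
  have hfac : ∀ S ∈ ((univ : Finset X) \ A).powerset.filter (fun S => S.Nonempty),
      ((∏ j ∈ S, (1 - ε j)) * ∏ j ∈ ((univ : Finset X) \ {i}) \ S, ε j) * c =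
      (c * ∏ j ∈ A \ {i}, ε j) *
        ((∏ j ∈ S, (1 - ε j)) * ∏ j ∈ ((univ : Finset X) \ A) \ S, ε j) := by
    intro S hS
    have hSB : S ⊆ (univ : Finset X) \ A := mem_powerset.1 (mem_filter.1 hS).1
    have hsplit : ((univ : Finset X) \ {i}) \ S = (A \ {i}) ∪ (((univ : Finset X) \ A) \ S) := by
      ext x
      simp only [mem_sdiff, mem_union, mem_univ, true_and, mem_singleton]
      constructor
      · rintro ⟨hxi, hxS⟩
        by_cases hxA : x ∈ A
        · exact Or.inl ⟨hxA, hxi⟩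
        · exact Or.inr ⟨hxA, hxS⟩
      · rintro (⟨hxA, hxi⟩ | ⟨hxB, hxS⟩)
        · exact ⟨hxi, fun h => (mem_sdiff.1 (hSB h)).2 hxA⟩
        · refine ⟨fun h => ?_, hxS⟩
          subst h; exact hxB hiA
    have hdisj : Disjoint (A \ {i}) (((univ : Finset X) \ A) \ S) := by
      refine disjoint_left.2 fun x hx hx' => ?_
      rw [mem_sdiff] at hx hx'
      exact (mem_sdiff.1 hx'.1).2 hx.1
    rw [hsplit, Finset.prod_union hdisj]
    ring
  rw [Finset.sum_congr rfl hfac, ← Finset.mul_sum]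
  -- step 4: sum over nonempty subsets
  have hne : ((univ : Finset X) \ A).powerset.filter (fun S => ¬ S.Nonempty) = {∅} := by
    ext S
    simp only [mem_filter, mem_powerset, Finset.not_nonempty_iff_eq_empty, mem_singleton]
    constructor
    · rintro ⟨_, h⟩; exact h
    · rintro rfl; exact ⟨empty_subset _, rfl⟩
  have htot := bernoulli_sum ε ((univ : Finset X) \ A)
  rw [← Finset.sum_filter_add_sum_filter_not ((univ : Finset X) \ A).powerset
      (fun S => S.Nonempty)
      (fun S => (∏ j ∈ S, (1 - ε j)) * ∏ j ∈ ((univ : Finset X) \ A) \ S, ε j), hne] at htot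
  simp only [Finset.sum_singleton, Finset.prod_empty, Finset.sdiff_empty, one_mul] at htot
  have hsum : ∑ S ∈ ((univ : Finset X) \ A).powerset.filter (fun S => S.Nonempty),
      (∏ j ∈ S, (1 - ε j)) * ∏ j ∈ ((univ : Finset X) \ A) \ S, ε j
      = 1 - ∏ j ∈ (univ : Finset X) \ A, ε j := by
    linarith
  rw [hsum]

theorem unrooted_HED_formula {X E : Type*} [Fintype X] [Fintype E] [DecidableEq X]
    (l : E → ℝ) (σ : E → Finset X) (ε : X → ℝ) (i : X) :
    psiU l σ ε i =
      ∑ e ∈ (univ : Finset E),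
        l e * (∏ j ∈ sideOf σ i e \ {i}, ε j) *
          (1 - ∏ j ∈ (univ : Finset X) \ sideOf σ i e, ε j) := by
  classical
  have hPD : ∀ T : Finset X, PDu l σ T =
      ∑ e : E, if ((sideOf σ i e ∩ T).Nonempty ∧
          (((univ : Finset X) \ sideOf σ i e) ∩ T).Nonempty) then l e else 0 := by
    intro T
    rw [PDu, sum_filter]
    refine Finset.sum_congr rfl fun e _ => ?_
    refine if_congr ?_ rfl rfl
    unfold sideOf
    by_cases h : i ∈ σ e
    · simp [h]
    · simp only [h, if_false]
      rw [Finset.sdiff_sdiff_self_left, univ_inter]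
      exact and_comm
  unfold psiU
  simp only [hPD, ← Finset.sum_sub_distrib, Finset.mul_sum]
  rw [Finset.sum_comm]
  refine Finset.sum_congr rfl fun e _ => ?_
  have hiA : i ∈ sideOf σ i e := by
    unfold sideOf
    by_cases h : i ∈ σ e <;> simp [h]
  exact edge_sum ε i (sideOf σ i e) hiA (l e)
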